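/- For natural numbers n ≥ 1, k ≥ 1, and any real number N (or element of a field of characteristic zero), ∏_{i=1}^{k} (1 - N/(n+i)) = Σ_{j=0}^{k} (-1)^j · C(k,j) · (N)_{(j)} / (n+k)_{(j)}, where (N)_{(j)} = N(N-1)···(N-j+1) and (n+k)_{(j)} = (n+k)(n+k-1)···(n+k-j+1). -/
import Mathlib

open Finset

lemma key7 (k : ℕ) : ∀ N y : ℝ, ∏ r ∈ range k, (y - N - (r:ℝ)) =
    ∑ j ∈ range (k+1), (-1:ℝ)^j * (k.choose j : ℝ) * (∏ r ∈ range j, (N - (r:ℝ))) *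
      ∏ r ∈ range (k-j), (y - (j:ℝ) - (r:ℝ)) := by
  induction k with
  | zero => intro N y; simp
  | succ k ih =>
    intro N y
    have hL : ∏ r ∈ range (k+1), (y - N - (r:ℝ)) =
        (y - N) * ∏ r ∈ range k, ((y-1) - N - (r:ℝ)) := by
      rw [Finset.prod_range_succ']
      have h0 : (y - N - ((0:ℕ):ℝ)) = y - N := by norm_num
      rw [h0, mul_comm]
      congr 1
      exact Finset.prod_congr rfl fun r _ => by push_cast; ring
    rw [hL, ih N (y-1), Finset.mul_sum, eq_comm]
    -- goal: Σ_{j<k+2} T j = Σ_i (y-N)*old_i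
    rw [Finset.sum_range_succ'
      (fun j => (-1:ℝ)^j * ((k+1).choose j : ℝ) * (∏ r ∈ range j, (N - (r:ℝ))) *
        ∏ r ∈ range (k+1-j), (y - (j:ℝ) - (r:ℝ))) (k+1)]
    have hterm : ∀ i ∈ range (k+1),
        (-1:ℝ)^(i+1) * ((k+1).choose (i+1) : ℝ) * (∏ r ∈ range (i+1), (N - (r:ℝ))) *
          ∏ r ∈ range (k+1-(i+1)), (y - ((i+1:ℕ):ℝ) - (r:ℝ))
        = (-1:ℝ)^(i+1) * (k.choose (i+1) : ℝ) * (∏ r ∈ range (i+1), (N - (r:ℝ))) *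
            ∏ r ∈ range (k+1-(i+1)), (y - ((i+1:ℕ):ℝ) - (r:ℝ))
          + (-((-1:ℝ)^i * (k.choose i : ℝ) * (∏ r ∈ range i, (N - (r:ℝ))) * (N - (i:ℝ)) *
            ∏ r ∈ range (k-i), ((y-1) - (i:ℝ) - (r:ℝ)))) := by
      intro i hi
      have hc : (((k+1).choose (i+1) : ℕ) : ℝ) = (k.choose i : ℝ) + (k.choose (i+1) : ℝ) := by
        rw [Nat.choose_succ_succ]; push_cast; ring
      have hP : ∏ r ∈ range (i+1), (N - (r:ℝ)) = (∏ r ∈ range i, (N - (r:ℝ))) * (N - (i:ℝ)) :=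
        Finset.prod_range_succ _ _
      have hQ : ∏ r ∈ range (k+1-(i+1)), (y - ((i+1:ℕ):ℝ) - (r:ℝ))
          = ∏ r ∈ range (k-i), ((y-1) - (i:ℝ) - (r:ℝ)) := by
        rw [Nat.succ_sub_succ]
        exact Finset.prod_congr rfl fun r _ => by push_cast; ring
      rw [hc, hQ, hP]
      ring
    rw [Finset.sum_congr rfl hterm, Finset.sum_add_distrib]
    -- now: (ΣA + ΣB) + T0 = Σ (y-N)*old
    have h1 : (∑ i ∈ range (k+1), (-1:ℝ)^(i+1) * (k.choose (i+1) : ℝ) *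
          (∏ r ∈ range (i+1), (N - (r:ℝ))) *
          ∏ r ∈ range (k+1-(i+1)), (y - ((i+1:ℕ):ℝ) - (r:ℝ)))
        + (-1:ℝ)^0 * ((k+1).choose 0 : ℝ) * (∏ r ∈ range 0, (N - (r:ℝ))) *
          ∏ r ∈ range (k+1-0), (y - ((0:ℕ):ℝ) - (r:ℝ))
        = ∑ j ∈ range (k+1), (-1:ℝ)^j * (k.choose j : ℝ) * (∏ r ∈ range j, (N - (r:ℝ))) *
            ((∏ r ∈ range (k-j), ((y-1) - (j:ℝ) - (r:ℝ))) * (y - (j:ℝ))) := by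
      have hs := Finset.sum_range_succ'
        (fun j => (-1:ℝ)^j * (k.choose j : ℝ) * (∏ r ∈ range j, (N - (r:ℝ))) *
          ∏ r ∈ range (k+1-j), (y - (j:ℝ) - (r:ℝ))) (k+1)
      rw [Finset.sum_range_succ] at hs
      -- hs : Σ_{j<k+1} T' j + T'(k+1) = Σ_{i<k+1} T'(i+1) + T' 0
      have hz : (-1:ℝ)^(k+1) * (k.choose (k+1) : ℝ) * (∏ r ∈ range (k+1), (N - (r:ℝ))) *
          ∏ r ∈ range (k+1-(k+1)), (y - ((k+1:ℕ):ℝ) - (r:ℝ)) = 0 := by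
        simp [Nat.choose_succ_self]
      rw [hz, add_zero] at hs
      rw [show ((((k+1).choose 0 : ℕ)) : ℝ) = ((k.choose 0 : ℕ) : ℝ) by simp]
      rw [← hs]
      apply Finset.sum_congr rfl
      intro j hj
      have hj' : j < k + 1 := Finset.mem_range.mp hj
      have hkj : k + 1 - j = (k - j) + 1 := by omega
      rw [hkj, Finset.prod_range_succ']
      congr 1
      congr 1
      · exact Finset.prod_congr rfl fun r _ => by push_cast; ring
      · norm_num
    rw [add_right_comm, h1, ← Finset.sum_add_distrib]
    apply Finset.sum_congr rfl
    intro j hj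
    push_cast
    ring

theorem stmt_7 (n k : ℕ) (hn : 1 ≤ n) (hk : 1 ≤ k) (N : ℝ) :
    ∏ i ∈ Finset.range k, (1 - N / ((n : ℝ) + (i : ℝ) + 1)) =
      ∑ j ∈ Finset.range (k + 1),
        (-1 : ℝ) ^ j * (k.choose j : ℝ) *
          (∏ r ∈ Finset.range j, (N - (r : ℝ))) /
          ∏ r ∈ Finset.range j, (((n + k : ℕ) : ℝ) - (r : ℝ)) := by
  have hpos : ∀ r : ℕ, r < k → (0:ℝ) < ((n + k : ℕ) : ℝ) - r := by
    intro r hr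
    have : (r:ℝ) < ((n + k : ℕ):ℝ) := by exact_mod_cast by omega
    linarith
  have hne : ∀ r ∈ range k, ((n + k : ℕ) : ℝ) - (r:ℝ) ≠ 0 := fun r hr =>
    ne_of_gt (hpos r (mem_range.mp hr))
  have hDk : ∏ r ∈ range k, (((n + k : ℕ) : ℝ) - (r:ℝ)) ≠ 0 :=
    Finset.prod_ne_zero_iff.mpr hne
  -- rewrite LHS
  have hrefl : ∀ c : ℝ, ∏ r ∈ range k, (((n + k : ℕ):ℝ) - c - (r:ℝ)) =
      ∏ i ∈ range k, ((n:ℝ) + (i:ℝ) + 1 - c) := by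
    intro c
    rw [← Finset.prod_range_reflect]
    apply Finset.prod_congr rfl
    intro j hj
    have hj' : j < k := mem_range.mp hj
    have h1 : ((k - 1 - j : ℕ) : ℝ) = (k:ℝ) - 1 - (j:ℝ) := by
      have : k - 1 - j + (j + 1) = k := by omega
      have := congrArg (Nat.cast : ℕ → ℝ) this
      push_cast at this
      linarith
    rw [h1]
    push_cast
    ring
  have hLHS : ∏ i ∈ range k, (1 - N / ((n:ℝ) + (i:ℝ) + 1)) =
      (∏ r ∈ range k, (((n + k : ℕ):ℝ) - N - (r:ℝ))) /
        ∏ r ∈ range k, (((n + k : ℕ):ℝ) - (r:ℝ)) := by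
    rw [hrefl N]
    have h0 := hrefl 0
    simp only [sub_zero] at h0
    rw [h0, ← Finset.prod_div_distrib]
    apply Finset.prod_congr rfl
    intro i hi
    have hipos : (0:ℝ) < (n:ℝ) + (i:ℝ) + 1 := by positivity
    field_simp
  rw [hLHS, key7 k N (((n + k : ℕ)):ℝ), Finset.sum_div]
  apply Finset.sum_congr rfl
  intro j hj
  have hj' : j ≤ k := by have := mem_range.mp hj; omega
  have hD : ∏ r ∈ range k, (((n + k : ℕ):ℝ) - (r:ℝ)) =
      (∏ r ∈ range j, (((n + k : ℕ):ℝ) - (r:ℝ))) *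
        ∏ r ∈ range (k - j), (((n + k : ℕ):ℝ) - (j:ℝ) - (r:ℝ)) := by
    have := Finset.prod_range_add (fun r => (((n + k : ℕ):ℝ) - (r:ℝ))) j (k - j)
    rw [show j + (k - j) = k by omega] at this
    rw [this]
    congr 1
    apply Finset.prod_congr rfl
    intro r _
    push_cast
    ring
  have hDj : (∏ r ∈ range j, (((n + k : ℕ):ℝ) - (r:ℝ))) ≠ 0 := by
    apply Finset.prod_ne_zero_iff.mpr
    intro r hr
    exact ne_of_gt (hpos r (by have := mem_range.mp hr; omega))
  have hQ : (∏ r ∈ range (k - j), (((n + k : ℕ):ℝ) - (j:ℝ) - (r:ℝ))) ≠ 0 := by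
    apply Finset.prod_ne_zero_iff.mpr
    intro r hr
    have hr' : r < k - j := mem_range.mp hr
    have : ((j + r : ℕ):ℝ) < ((n + k : ℕ):ℝ) := by exact_mod_cast by omega
    push_cast at this
    intro h; push_cast at h; linarith
  rw [hD, mul_comm (∏ r ∈ range j, (((n + k : ℕ):ℝ) - (r:ℝ)))
    (∏ r ∈ range (k - j), (((n + k : ℕ):ℝ) - (j:ℝ) - (r:ℝ))), mul_comm
    ((-1:ℝ)^j * (k.choose j : ℝ) * (∏ r ∈ range j, (N - (r:ℝ))))
    (∏ r ∈ range (k - j), (((n + k : ℕ):ℝ) - (j:ℝ) - (r:ℝ))),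
    mul_div_mul_left _ _ hQ]
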